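/- Let g: ℝᵐ × ℝⁿ → ℝˡ be continuously differentiable around (p̄,x̄), C ⊂ ℝˡ closed with g(p̄,x̄) ∈ C, and suppose there exist neighborhoods V of p̄, U of x̄ and κ ≥ 0 such that dist(x, Γ(p)) ≤ κ·dist(g(p,x), C) for all (p,x) ∈ V × U, where Γ(p) = {x : g(p,x) ∈ C}. Then the partial bounded multiplier property holds: after possibly shrinking V and U, for every p ∈ V, every x ∈ Γ(p) ∩ U, and every v ∈ N_{Γ(p)}(x) there exists λ ∈ N_C(g(p,x)) with ∇_x g(p,x)*λ = v and ‖λ‖ ≤ κ‖v‖. -/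

import Mathlib

open Filter Topology
open scoped RealInnerProductSpace

/-- The contingent (Bouligand) cone. -/
def contTangent {E : Type*} [NormedAddCommGroup E] [NormedSpace ℝ E]
    (Ω : Set E) (z : E) : Set E :=
  {u | ∃ (t : ℕ → ℝ) (w : ℕ → E), (∀ k, 0 < t k) ∧ Tendsto t atTop (𝓝 0) ∧
    Tendsto w atTop (𝓝 u) ∧ ∀ k, z + t k • w k ∈ Ω}

/-- The regular (Fréchet) normal cone: the polar of the contingent cone. -/
def regNormal {E : Type*} [NormedAddCommGroup E] [InnerProductSpace ℝ E]
    (Ω : Set E) (z : E) : Set E :=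
  {v | ∀ u ∈ contTangent Ω z, ⟪v, u⟫ ≤ (0 : ℝ)}

/-- The limiting (Mordukhovich) normal cone. -/
def limNormal {E : Type*} [NormedAddCommGroup E] [InnerProductSpace ℝ E]
    (Ω : Set E) (z : E) : Set E :=
  {v | ∃ (zs vs : ℕ → E), (∀ k, zs k ∈ Ω) ∧ (∀ k, vs k ∈ regNormal Ω (zs k)) ∧
    Tendsto zs atTop (𝓝 z) ∧ Tendsto vs atTop (𝓝 v)}

open Metric

variable {E F : Type*} [NormedAddCommGroup E] [InnerProductSpace ℝ E]
  [NormedAddCommGroup F] [InnerProductSpace ℝ F]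

lemma zero_mem_regNormal (Ω : Set E) (z : E) : (0 : E) ∈ regNormal Ω z := by
  intro w _
  simp

lemma regNormal_subset_limNormal {Ω : Set E} {z : E} (hz : z ∈ Ω) {v : E}
    (hv : v ∈ regNormal Ω z) : v ∈ limNormal Ω z :=
  ⟨fun _ => z, fun _ => v, fun _ => hz, fun _ => hv, tendsto_const_nhds,
    tendsto_const_nhds⟩

lemma regNormal_smul {Ω : Set E} {z v : E} (hv : v ∈ regNormal Ω z) {c : ℝ}
    (hc : 0 ≤ c) : c • v ∈ regNormal Ω z := by
  intro u hu
  rw [real_inner_smul_left]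
  exact mul_nonpos_of_nonneg_of_nonpos hc (hv u hu)

lemma proj_mem_regNormal {Ω : Set E} {y q : E} (hy : y ∈ Ω) {R : ℝ} (hR : 0 < R)
    (hmin : ∀ y' ∈ Ω, dist y' y < R → ‖q - y‖ ≤ ‖q - y'‖) :
    q - y ∈ regNormal Ω y := by
  rintro u ⟨t, w, ht, ht0, hw, hmem⟩
  have hsmall : Tendsto (fun k => t k • w k) atTop (𝓝 0) := by
    simpa using ht0.smul hw
  have hev : ∀ᶠ k in atTop, dist (y + t k • w k) y < R := by
    have h2 : Tendsto (fun k => dist (y + t k • w k) y) atTop (𝓝 0) := by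
      simpa [dist_eq_norm] using hsmall.norm
    exact h2.eventually_lt_const hR
  have key : ∀ᶠ k in atTop, ⟪q - y, w k⟫ ≤ t k * ‖w k‖^2 / 2 := by
    filter_upwards [hev] with k hk
    have h1 : ‖q - y‖ ≤ ‖q - (y + t k • w k)‖ := hmin _ (hmem k) hk
    have h2 : q - (y + t k • w k) = (q - y) - t k • w k := by abel
    rw [h2] at h1
    have h3 : ‖(q - y) - t k • w k‖^2
        = ‖q - y‖^2 - 2 * ⟪q - y, t k • w k⟫ + ‖t k • w k‖^2 := by
      rw [norm_sub_sq_real]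
    have h4 : ‖q - y‖ ^ 2 ≤ ‖(q - y) - t k • w k‖ ^ 2 :=
      pow_le_pow_left₀ (norm_nonneg _) h1 2
    have h5 : ⟪q - y, t k • w k⟫ = t k * ⟪q - y, w k⟫ := real_inner_smul_right _ _ _
    have h6 : ‖t k • w k‖ ^ 2 = t k ^ 2 * ‖w k‖ ^ 2 := by
      rw [norm_smul, mul_pow, Real.norm_eq_abs, sq_abs]
    have htk := ht k
    nlinarith [sq_nonneg (‖w k‖)]
  have ha : Tendsto (fun k => ⟪q - y, w k⟫) atTop (𝓝 ⟪q - y, u⟫) :=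
    Tendsto.inner tendsto_const_nhds hw
  have hb : Tendsto (fun k => t k * ‖w k‖^2 / 2) atTop (𝓝 0) := by
    have := (ht0.mul ((hw.norm.pow 2))).div_const 2
    simpa using this
  exact le_of_tendsto_of_tendsto ha hb key

lemma frechet_of_regNormal [FiniteDimensional ℝ E] {Ω : Set E} {u v : E}
    (hv : v ∈ regNormal Ω u) {ε : ℝ} (hε : 0 < ε) :
    ∃ ρ > 0, ∀ ζ ∈ Ω, dist ζ u < ρ → ⟪v, ζ - u⟫ ≤ ε * ‖ζ - u‖ := by
  by_contra hcon
  push_neg at hcon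
  have hch : ∀ k : ℕ, ∃ ζ, ζ ∈ Ω ∧ dist ζ u < 1/(k+1) ∧ ε * ‖ζ - u‖ < ⟪v, ζ - u⟫ := by
    intro k
    obtain ⟨ζ, h1, h2, h3⟩ := hcon (1/(k+1)) (by positivity)
    exact ⟨ζ, h1, h2, h3⟩
  choose ζ hζΩ hζd hζi using hch
  set t : ℕ → ℝ := fun k => ‖ζ k - u‖ with ht_def
  have htpos : ∀ k, 0 < t k := by
    intro k
    rcases eq_or_lt_of_le (norm_nonneg (ζ k - u)) with h | h
    · exfalso
      have h0 : ζ k - u = 0 := by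
        rw [← norm_eq_zero]; exact h.symm
      have := hζi k
      rw [h0] at this
      simp at this
    · exact h
  set w : ℕ → E := fun k => (t k)⁻¹ • (ζ k - u) with hw_def
  have hwsph : ∀ k, w k ∈ Metric.sphere (0:E) 1 := by
    intro k
    have h1 : ‖w k‖ = 1 := by
      rw [hw_def]
      simp only [norm_smul, Real.norm_eq_abs, abs_inv, abs_of_pos (htpos k)]
      exact inv_mul_cancel₀ (ne_of_gt (htpos k))
    simpa [Metric.mem_sphere, dist_zero_right] using h1
  obtain ⟨a, -, φ, hφ, hwa⟩ := (isCompact_sphere (0:E) 1).tendsto_subseq hwsph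
  have ht0 : Tendsto t atTop (𝓝 0) := by
    have hle : ∀ k : ℕ, t k ≤ 1/(k+1) :=
      fun k => le_of_lt (by simpa [ht_def, dist_eq_norm] using hζd k)
    exact squeeze_zero (fun k => norm_nonneg _) hle
      tendsto_one_div_add_atTop_nhds_zero_nat
  have hmem : ∀ k, u + t (φ k) • w (φ k) ∈ Ω := by
    intro k
    have : t (φ k) • w (φ k) = ζ (φ k) - u := by
      rw [hw_def]
      exact smul_inv_smul₀ (ne_of_gt (htpos _)) _
    rw [this]
    simpa using hζΩ (φ k)
  have hva : ⟪v, a⟫ ≤ (0:ℝ) :=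
    hv a ⟨fun k => t (φ k), fun k => w (φ k), fun k => htpos _,
      ht0.comp hφ.tendsto_atTop, hwa, hmem⟩
  have hlb : ∀ k, ε ≤ ⟪v, w (φ k)⟫ := by
    intro k
    have hi := hζi (φ k)
    have h1 : ⟪v, w (φ k)⟫ = (t (φ k))⁻¹ * ⟪v, ζ (φ k) - u⟫ := by
      rw [hw_def, real_inner_smul_right]
    rw [h1]
    rw [← sub_nonneg]
    have htk := htpos (φ k)
    have h2 : (t (φ k))⁻¹ * ⟪v, ζ (φ k) - u⟫ - ε
        = (t (φ k))⁻¹ * (⟪v, ζ (φ k) - u⟫ - ε * t (φ k)) := by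
      field_simp
    rw [h2]
    have h3 : (0:ℝ) ≤ ⟪v, ζ (φ k) - u⟫ - ε * t (φ k) := by
      rw [sub_nonneg, ht_def]
      exact le_of_lt hi
    positivity
  have hlim : Tendsto (fun k => ⟪v, w (φ k)⟫) atTop (𝓝 ⟪v, a⟫) :=
    Tendsto.inner tendsto_const_nhds hwa
  have : ε ≤ ⟪v, a⟫ := le_of_tendsto_of_tendsto tendsto_const_nhds hlim
    (Eventually.of_forall hlb)
  linarith

private lemma aux_alpha {a b : ℝ} (ha : 0 < a) (hb : 0 < b) :
    a*(2*(b/(8*(a+1)))) ≤ b := by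
  rw [div_eq_mul_inv]
  rw [show a*(2*(b*(8*(a+1))⁻¹)) = (2*a)*(8*(a+1))⁻¹*b by ring]
  have h1 : (2*a)*(8*(a+1))⁻¹ ≤ 1 := by
    rw [mul_inv_le_iff₀ (by positivity)]
    nlinarith
  nlinarith [mul_le_mul_of_nonneg_right h1 hb.le]

private lemma aux_eps {a b : ℝ} (ha : 0 < a) (hb : 0 < b) :
    4*(b/(8*(a+1))) ≤ b := by
  rw [div_eq_mul_inv]
  rw [show 4*(b*(8*(a+1))⁻¹) = 4*(8*(a+1))⁻¹*b by ring]
  have h1 : 4*(8*(a+1))⁻¹ ≤ 1 := by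
    rw [mul_inv_le_iff₀ (by positivity)]
    nlinarith
  nlinarith [mul_le_mul_of_nonneg_right h1 hb.le]

private lemma aux_quad {X e : ℝ} (hX : 0 ≤ X) (he : 0 < e)
    (h : X^2 ≤ e*X + e^2) : X ≤ 2*e := by
  nlinarith [sq_nonneg (X - 2*e), sq_nonneg (X + e)]

private lemma aux_lt {M d e rr : ℝ} (hM : 0 < M) (hd : 0 ≤ d)
    (h1 : M*d ≤ 2*e) (h2 : 8*e < M*rr) : d < rr/4 := by
  nlinarith

set_option maxHeartbeats 2000000 in
lemma exists_approx [FiniteDimensional ℝ E] [FiniteDimensional ℝ F]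
    {h : E → F} {C : Set F} (hC : IsClosed C)
    {u : E} (hu : h u ∈ C)
    {r : ℝ} (hr : 0 < r) (hh : ContDiffOn ℝ 1 h (ball u (2*r)))
    {κ : ℝ} (hκ : 0 < κ)
    (hsub : ∀ ξ ∈ closedBall u r,
      Metric.infDist ξ {x | h x ∈ C} ≤ κ * Metric.infDist (h ξ) C)
    {v : E} (hv : v ∈ regNormal {x | h x ∈ C} u)
    {ε : ℝ} (hε : 0 < ε) :
    ∃ x' y' lam, y' ∈ C ∧ lam ∈ regNormal C y' ∧ ‖lam‖ ≤ κ * ‖v‖ + ε ∧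
      dist x' u ≤ ε ∧ dist y' (h u) ≤ ε ∧ x' ∈ ball u (2*r) ∧
      ‖v - (ContinuousLinearMap.adjoint (fderiv ℝ h x')) lam‖ ≤ ε := by
  classical
  set Γ : Set E := {x | h x ∈ C} with hΓdef
  have huΓ : u ∈ Γ := hu
  set ε' : ℝ := ε / (8 * (κ + 1)) with hε'def
  have hε' : 0 < ε' := by positivity
  obtain ⟨ρ, hρ, hFre⟩ := frechet_of_regNormal hv hε'
  -- continuity of h at u
  have hcu : ContinuousAt h u := by
    have : ball u (2*r) ∈ 𝓝 u := isOpen_ball.mem_nhds (by simp [hr])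
    exact (hh.continuousOn.continuousAt this)
  obtain ⟨ρ₂, hρ₂, hcont⟩ :
      ∃ ρ₂ > 0, ∀ x, dist x u < ρ₂ → dist (h x) (h u) < min (ε/4) 4⁻¹ := by
    have := Metric.tendsto_nhds_nhds.mp hcu (min (ε/4) 4⁻¹) (by positivity)
    obtain ⟨δ, hδ, hδ'⟩ := this
    exact ⟨δ, hδ, fun x hx => hδ' hx⟩
  set r' : ℝ := min r (min (ρ/4) (min ρ₂ (min (κ*ε/4) (min (κ/8) ε)))) with hr'def
  have hr' : 0 < r' := by positivity
  have hr'r : r' ≤ r := min_le_left _ _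
  have hr'ρ : 3 * r' < ρ := by
    have : r' ≤ ρ/4 := le_trans (min_le_right _ _) (min_le_left _ _)
    linarith
  have hr'ρ₂ : r' ≤ ρ₂ := le_trans (min_le_right _ _) (le_trans (min_le_right _ _) (min_le_left _ _))
  have hr'κε : r' ≤ κ*ε/4 := le_trans (min_le_right _ _) (le_trans (min_le_right _ _) (le_trans (min_le_right _ _) (min_le_left _ _)))
  have hr'κ8 : r' ≤ κ/8 := le_trans (min_le_right _ _) (le_trans (min_le_right _ _) (le_trans (min_le_right _ _) (le_trans (min_le_right _ _) (min_le_left _ _))))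
  have hr'ε : r' ≤ ε := le_trans (min_le_right _ _) (le_trans (min_le_right _ _) (le_trans (min_le_right _ _) (le_trans (min_le_right _ _) (min_le_right _ _))))
  set α : ℝ := κ * (‖v‖ + 2*ε') with hαdef
  have hα : 0 < α := by positivity
  set M : ℝ := 8*ε'/r' + 1 with hMdef
  have hM : 0 < M := by positivity
  set s : ℝ := min (ε/4) (min 8⁻¹ (ε'^2/(M*α))) with hsdef
  have hs : 0 < s := by positivity
  have hsε4 : s ≤ ε/4 := min_le_left _ _
  have hs8 : s ≤ 8⁻¹ := le_trans (min_le_right _ _) (min_le_left _ _)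
  have hsMα : s ≤ ε'^2/(M*α) := le_trans (min_le_right _ _) (min_le_right _ _)
  -- compact minimization
  set K : Set (E × F) := (closedBall u r') ×ˢ (C ∩ closedBall (h u) 1) with hKdef
  have hKc : IsCompact K := (isCompact_closedBall u r').prod
    (IsCompact.of_isClosed_subset (isCompact_closedBall (h u) 1)
      (hC.inter isClosed_closedBall) Set.inter_subset_right)
  have hKne : K.Nonempty := ⟨(u, h u), by
    refine Set.mk_mem_prod ?_ ⟨hu, ?_⟩ <;> simp [hr'.le]⟩
  set Φ : E × F → ℝ := fun q =>
    -⟪v, q.1 - u⟫ + M*‖q.1 - u‖^2 + α*Real.sqrt (s^2 + ‖h q.1 - q.2‖^2) with hΦdef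
  have hball : closedBall u r' ⊆ ball u (2*r) := by
    intro x hx
    simp only [mem_closedBall] at hx
    simp only [mem_ball]
    linarith
  have hΦcont : ContinuousOn Φ K := by
    have hhc : ContinuousOn (fun q : E × F => h q.1) K :=
      (hh.continuousOn.mono hball).comp continuous_fst.continuousOn
        (fun q hq => hq.1)
    have h3 : ContinuousOn (fun q : E × F => Real.sqrt (s^2 + ‖h q.1 - q.2‖^2)) K :=
      Real.continuous_sqrt.comp_continuousOn
        (continuousOn_const.add (((hhc.sub continuous_snd.continuousOn).norm).pow 2))
    have c1 : Continuous (fun q : E × F => -⟪v, q.1 - u⟫) := by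
      have : Continuous (fun q : E × F => q.1 - u) := continuous_fst.sub continuous_const
      exact (continuous_const.inner this).neg
    have c2 : Continuous (fun q : E × F => M*‖q.1 - u‖^2) := by
      have : Continuous (fun q : E × F => q.1 - u) := continuous_fst.sub continuous_const
      exact continuous_const.mul (this.norm.pow 2)
    exact ((c1.add c2).continuousOn).add (continuousOn_const.mul h3)
  obtain ⟨⟨x', y'⟩, hmemK, hmin⟩ := hKc.exists_isMinOn hKne hΦcont
  have hminOn := isMinOn_iff.mp hmin
  obtain ⟨hx'B, hy'C, hy'B⟩ : x' ∈ closedBall u r' ∧ y' ∈ C ∧ y' ∈ closedBall (h u) 1 := by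
    obtain ⟨h1, h2, h3⟩ := hmemK
    exact ⟨h1, h2, h3⟩
  set d' : ℝ := ‖x' - u‖ with hd'def
  have hd'0 : 0 ≤ d' := norm_nonneg _
  have hd'r' : d' ≤ r' := by simpa [hd'def, ← dist_eq_norm] using hx'B
  set qn : ℝ := ‖h x' - y'‖ with hqndef
  have hqn0 : 0 ≤ qn := norm_nonneg _
  set S : ℝ := Real.sqrt (s^2 + qn^2) with hSdef
  have hS : 0 < S := Real.sqrt_pos.mpr (by positivity)
  have hqS : qn ≤ S := by
    rw [hSdef]
    nlinarith [Real.sq_sqrt (show (0:ℝ) ≤ s^2 + qn^2 by positivity),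
      Real.sqrt_nonneg (s^2 + qn^2), sq_nonneg s]
  have hsS : s ≤ S := by
    rw [hSdef]
    nlinarith [Real.sq_sqrt (show (0:ℝ) ≤ s^2 + qn^2 by positivity),
      Real.sqrt_nonneg (s^2 + qn^2), sq_nonneg qn]
  have hΦx' : Φ (x', y') = -⟪v, x' - u⟫ + M*d'^2 + α*S := rfl
  have hIneqA : -⟪v, x' - u⟫ + M*d'^2 + α*S ≤ α*s := by
    have h1 := hminOn (u, h u)
      ⟨mem_closedBall_self hr'.le, hu, mem_closedBall_self zero_le_one⟩
    have h2 : Φ (u, h u) = α * s := by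
      simp [hΦdef, Real.sqrt_sq hs.le]
    calc -⟪v, x' - u⟫ + M*d'^2 + α*S = Φ (x', y') := rfl
      _ ≤ Φ (u, h u) := h1
      _ = α * s := h2
  have hΓne : Γ.Nonempty := ⟨u, huΓ⟩
  have hd'dist : dist x' u = d' := dist_eq_norm x' u
  have hinfΓ_d' : Metric.infDist x' Γ ≤ d' := by
    have h0 : Metric.infDist x' Γ ≤ dist x' u := Metric.infDist_le_dist_of_mem huΓ
    rwa [hd'dist] at h0
  have hsubx : Metric.infDist x' Γ ≤ κ * Metric.infDist (h x') C :=
    hsub x' (closedBall_subset_closedBall hr'r hx'B)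
  have hinfC_qn : Metric.infDist (h x') C ≤ qn := by
    have h0 : Metric.infDist (h x') C ≤ dist (h x') y' := Metric.infDist_le_dist_of_mem hy'C
    rwa [dist_eq_norm] at h0
  have hIneqB : M*d'^2 ≤ ε'*d' + α*s := by
    have key : ∀ δ : ℝ, 0 < δ → M*d'^2 ≤ ε'*d' + α*s + δ := by
      intro δ hδ
      set δ' : ℝ := min (κ*δ/α) (r'/2) with hδ'def
      have hδ'pos : 0 < δ' := by positivity
      have hδ'r : δ' ≤ r'/2 := min_le_right _ _
      have hδ'le : δ' ≤ κ*δ/α := min_le_left _ _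
      obtain ⟨ζ, hζΓ, hbζ⟩ := (Metric.infDist_lt_iff hΓne).mp
        (lt_add_of_pos_right (Metric.infDist x' Γ) hδ'pos)
      set b : ℝ := dist x' ζ with hbdef
      have hb0 : 0 ≤ b := dist_nonneg
      have hζu : dist ζ u < ρ := by
        have h1 : dist ζ u ≤ b + d' := by
          calc dist ζ u ≤ dist ζ x' + dist x' u := dist_triangle _ _ _
            _ = b + d' := by rw [dist_comm ζ x', hd'dist]
        have h2 : b < d' + δ' := lt_of_lt_of_le hbζ (by linarith)
        linarith
      have hfre := hFre ζ hζΓ hζu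
      have e1 : ⟪v, x' - u⟫ = ⟪v, ζ - u⟫ + ⟪v, x' - ζ⟫ := by
        rw [← inner_add_right]
        congr 1
        abel
      have e2 : ⟪v, x' - ζ⟫ ≤ ‖v‖ * b := by
        have h3 := real_inner_le_norm v (x' - ζ)
        have h4 : ‖x' - ζ‖ = b := (dist_eq_norm x' ζ).symm
        calc ⟪v, x' - ζ⟫ ≤ ‖v‖ * ‖x' - ζ‖ := h3
          _ = ‖v‖ * b := by rw [h4]
      have e3 : ‖ζ - u‖ ≤ b + d' := by
        have h5 : ‖ζ - u‖ = dist ζ u := (dist_eq_norm ζ u).symm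
        rw [h5]
        calc dist ζ u ≤ dist ζ x' + dist x' u := dist_triangle _ _ _
          _ = b + d' := by rw [dist_comm ζ x', hd'dist]
      have e4 : b - δ' ≤ κ * S := by
        have h6 : κ * Metric.infDist (h x') C ≤ κ * qn :=
          mul_le_mul_of_nonneg_left hinfC_qn hκ.le
        have h7 : κ * qn ≤ κ * S := mul_le_mul_of_nonneg_left hqS hκ.le
        have h8 : b < Metric.infDist x' Γ + δ' := hbζ
        linarith [hsubx]
      have A2 : ε' * ‖ζ - u‖ ≤ ε' * (b + d') := mul_le_mul_of_nonneg_left e3 hε'.le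
      have A4 := mul_le_mul_of_nonneg_left e4 (show (0:ℝ) ≤ ‖v‖ + 2*ε' by positivity)
      have A4' : (‖v‖+2*ε')*(κ*S) = α*S := by rw [hαdef]; ring
      have A5 : (‖v‖+2*ε')*δ' ≤ δ := by
        have hαne : α ≠ 0 := ne_of_gt hα
        have h9 : (‖v‖+2*ε')*(κ*δ/α) = δ := by
          rw [hαdef]
          field_simp
        have h10 := mul_le_mul_of_nonneg_left hδ'le
          (show (0:ℝ) ≤ ‖v‖ + 2*ε' by positivity)
        linarith
      have c1 : ⟪v, x' - u⟫ ≤ ε'*(b+d') + ‖v‖*b := by linarith [e1, hfre, A2, e2]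
      have c2 : (‖v‖ + 2*ε')*(b - δ') ≤ α*S := by linarith [A4, A4']
      have c4 : 0 ≤ ε' * b := mul_nonneg hε'.le hb0
      linarith [hIneqA, c1, c2, A5, c4]
    exact le_of_forall_pos_le_add key
  -- bounds on d'
  have hαs : M * (α*s) ≤ ε'^2 := by
    have h0 : s * (M*α) ≤ ε'^2 := by
      rw [← le_div_iff₀ (by positivity)]
      exact hsMα
    linarith only [h0]
  have hMd' : M * d' ≤ 2*ε' := by
    have h0 := mul_le_mul_of_nonneg_left hIneqB hM.le
    have h1 : (M*d')^2 ≤ ε'*(M*d') + ε'^2 := by linarith only [h0, hαs]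
    exact aux_quad (mul_nonneg hM.le hd'0) hε' h1
  have hMr' : 8*ε' < M*r' := by
    have : M*r' = 8*ε' + r' := by
      rw [hMdef]
      field_simp
    rw [this]
    linarith [hr']
  have hd'r4 : d' < r'/4 := aux_lt hM hd'0 hMd' hMr'
  have hcx' : dist (h x') (h u) < min (ε/4) 4⁻¹ := by
    apply hcont
    rw [hd'dist]
    have : r'/4 < ρ₂ := by linarith [hr'ρ₂, hr']
    linarith
  have hiv : ⟪v, x' - u⟫ ≤ ‖v‖*d' := real_inner_le_norm v (x' - u)
  have hκv : κ*‖v‖ ≤ α := by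
    rw [hαdef]
    have h0 := mul_le_mul_of_nonneg_left (show ‖v‖ ≤ ‖v‖+2*ε' by linarith only [hε']) hκ.le
    linarith only [h0]
  have h3 : κ*(‖v‖*d') ≤ α*d' := by
    have h0 := mul_le_mul_of_nonneg_right hκv hd'0
    linarith only [h0]
  have hqn_le : qn ≤ s + d'/κ := by
    have h4 : α*qn ≤ α*S := mul_le_mul_of_nonneg_left hqS hα.le
    have h5 : α*S ≤ α*s + ‖v‖*d' := by
      have h0 : 0 ≤ M*d'^2 := mul_nonneg hM.le (sq_nonneg d')
      linarith only [hIneqA, hiv, h0]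
    have h6 : α*qn ≤ α*s + α*(d'/κ) := by
      have h7 : ‖v‖*d' ≤ α*(d'/κ) := by
        rw [mul_div_assoc']
        rw [le_div_iff₀ hκ]
        linarith only [h3]
      linarith only [h4, h5, h7]
    have h6' : α*qn ≤ α*(s + d'/κ) := by linarith only [h6]
    exact le_of_mul_le_mul_left h6' hα
  have hd'κε : d'/κ ≤ ε/16 := by
    rw [div_le_iff₀ hκ]
    linarith only [hd'r4, hr'κε]
  have hd'κ32 : d'/κ ≤ 1/32 := by
    rw [div_le_iff₀ hκ]
    linarith only [hd'r4, hr'κ8]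
  have hdy'x' : dist y' (h x') = qn := by
    rw [dist_comm, dist_eq_norm]
  have hy'hu : dist y' (h u) ≤ ε := by
    have h8 := dist_triangle y' (h x') (h u)
    have h9 : dist (h x') (h u) < ε/4 := lt_of_lt_of_le hcx' (min_le_left _ _)
    rw [hdy'x'] at h8
    linarith [hqn_le, hsε4, hd'κε, hε]
  have hy'half : dist y' (h u) ≤ 1/2 := by
    have h8 := dist_triangle y' (h x') (h u)
    have h9 : dist (h x') (h u) < 4⁻¹ := lt_of_lt_of_le hcx' (min_le_right _ _)
    rw [hdy'x'] at h8
    have h10 : (8:ℝ)⁻¹ + 1/32 + 4⁻¹ ≤ 1/2 := by norm_num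
    linarith [hqn_le, hs8, hd'κ32]
  have hproj : ∀ y'' ∈ C, dist y'' y' < 1/2 → ‖h x' - y'‖ ≤ ‖h x' - y''‖ := by
    intro y'' hy''C hy''d
    have hy''B : y'' ∈ closedBall (h u) 1 := by
      rw [mem_closedBall]
      calc dist y'' (h u) ≤ dist y'' y' + dist y' (h u) := dist_triangle _ _ _
        _ ≤ 1/2 + 1/2 := by linarith [hy'half]
        _ = 1 := by norm_num
    have h11 := hminOn (x', y'') ⟨hx'B, hy''C, hy''B⟩
    have h12 : α * Real.sqrt (s^2 + qn^2) ≤ α * Real.sqrt (s^2 + ‖h x' - y''‖^2) := by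
      have : Φ (x', y') = -⟪v, x' - u⟫ + M*‖x' - u‖^2 + α*Real.sqrt (s^2 + qn^2) := rfl
      have h13 : Φ (x', y'') = -⟪v, x' - u⟫ + M*‖x' - u‖^2
          + α*Real.sqrt (s^2 + ‖h x' - y''‖^2) := rfl
      rw [this, h13] at h11
      linarith
    by_contra hz
    push_neg at hz
    have hz2 : ‖h x' - y''‖^2 < qn^2 :=
      pow_lt_pow_left₀ hz (norm_nonneg _) (by norm_num)
    have h14 : Real.sqrt (s^2 + ‖h x' - y''‖^2) < Real.sqrt (s^2 + qn^2) :=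
      Real.sqrt_lt_sqrt (by positivity) (by linarith)
    have h15 := mul_lt_mul_of_pos_left h14 hα
    linarith only [h12, h15]
  have hregN : h x' - y' ∈ regNormal C y' :=
    proj_mem_regNormal hy'C (by norm_num : (0:ℝ) < 1/2) hproj
  -- optimality in x' and the multiplier
  have hx'int : x' ∈ ball u r' := by
    rw [mem_ball, hd'dist]
    linarith only [hd'r4, hr']
  have hx'2r : x' ∈ ball u (2*r) := hball hx'B
  have hdiff : DifferentiableAt ℝ h x' :=
    (hh.differentiableOn one_ne_zero).differentiableAt (isOpen_ball.mem_nhds hx'2r)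
  set Dh : E →L[ℝ] F := fderiv ℝ h x' with hDhdef
  have hDh : HasFDerivAt h Dh x' := hdiff.hasFDerivAt
  set G : E → ℝ := fun x =>
    -⟪v, x - u⟫ + M*‖x - u‖^2 + α*Real.sqrt (s^2 + ‖h x - y'‖^2) with hGdef
  have hGmin : IsLocalMin G x' := by
    have h0 : IsMinOn G (closedBall u r') x' := by
      apply isMinOn_iff.mpr
      intro x hx
      exact hminOn (x, y') ⟨hx, hy'C, hy'B⟩
    exact h0.isLocalMin (closedBall_mem_nhds_of_mem hx'int)
  have T1 : HasFDerivAt (fun x : E => ⟪v, x - u⟫) (innerSL ℝ v) x' := by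
    have h0 : HasFDerivAt (fun x : E => x - u) (ContinuousLinearMap.id ℝ E) x' :=
      (hasFDerivAt_id x').sub_const u
    have h1 := ((innerSL ℝ v).hasFDerivAt (x := x' - u)).comp x' h0
    exact h1
  have T2 : HasFDerivAt (fun x : E => ‖x - u‖^2) (2 • (innerSL ℝ (x' - u))) x' := by
    have h0 : HasFDerivAt (fun x : E => x - u) (ContinuousLinearMap.id ℝ E) x' :=
      (hasFDerivAt_id x').sub_const u
    have h1 := h0.norm_sq
    simpa using h1
  have T3 : HasFDerivAt (fun x : E => ‖h x - y'‖^2)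
      (2 • ((innerSL ℝ (h x' - y')).comp Dh)) x' := (hDh.sub_const y').norm_sq
  have hSne : s^2 + ‖h x' - y'‖^2 ≠ 0 := by positivity
  have T4 : HasFDerivAt (fun x : E => Real.sqrt (s^2 + ‖h x - y'‖^2))
      ((1/(2*S)) • (2 • ((innerSL ℝ (h x' - y')).comp Dh))) x' := by
    have h1 := (T3.const_add (s^2)).sqrt hSne
    exact h1
  have Gtot : HasFDerivAt G (-(innerSL ℝ v) + M • (2 • (innerSL ℝ (x' - u)))
      + α • ((1/(2*S)) • (2 • ((innerSL ℝ (h x' - y')).comp Dh)))) x' :=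
    ((T1.neg).add (T2.const_mul M)).add (T4.const_mul α)
  have hG'0 := hGmin.hasFDerivAt_eq_zero Gtot
  set lam : F := (α/S) • (h x' - y') with hlamdef
  have hlamreg : lam ∈ regNormal C y' := regNormal_smul hregN (by positivity)
  have hinner : ∀ w : E, ⟪v, w⟫ = 2*M*⟪x' - u, w⟫ + ⟪lam, Dh w⟫ := by
    intro w
    have h0 : ((-(innerSL ℝ v) + M • (2 • (innerSL ℝ (x' - u)))
        + α • ((1/(2*S)) • (2 • ((innerSL ℝ (h x' - y')).comp Dh)))) : E →L[ℝ] ℝ) w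
        = 0 := by
      rw [hG'0]
      rfl
    simp only [ContinuousLinearMap.add_apply, ContinuousLinearMap.neg_apply,
      ContinuousLinearMap.smul_apply, ContinuousLinearMap.comp_apply,
      innerSL_apply_apply, smul_eq_mul, nsmul_eq_mul, Nat.cast_ofNat] at h0
    rw [hlamdef, real_inner_smul_left]
    have hSne' : S ≠ 0 := ne_of_gt hS
    field_simp [hSne'] at h0 ⊢
    linarith only [h0]
  have hveq : v = (2*M) • (x' - u) + (ContinuousLinearMap.adjoint Dh) lam := by
    apply ext_inner_right ℝ
    intro w
    rw [inner_add_left, real_inner_smul_left, ContinuousLinearMap.adjoint_inner_left]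
    exact hinner w
  refine ⟨x', y', lam, hy'C, hlamreg, ?_, ?_, hy'hu, hx'2r, ?_⟩
  · -- norm bound on lam
    have h0 : ‖lam‖ = (α/S)*qn := by
      rw [hlamdef, norm_smul, Real.norm_eq_abs, abs_of_pos (by positivity), hqndef]
    have h1 : (α/S)*qn ≤ α := by
      rw [div_mul_eq_mul_div, div_le_iff₀ hS]
      have := mul_le_mul_of_nonneg_left hqS hα.le
      linarith only [this]
    have h2 : α ≤ κ*‖v‖ + ε := by
      rw [hαdef, hε'def]
      have h3 := aux_alpha hκ hε
      have h4 : κ*(‖v‖ + 2*(ε/(8*(κ+1)))) = κ*‖v‖ + κ*(2*(ε/(8*(κ+1)))) := by ring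
      rw [h4]
      linarith only [h3]
    rw [h0]
    exact le_trans h1 h2
  · rw [hd'dist]
    linarith only [hd'r4, hr'ε, hr']
  · rw [hveq]
    have h0 : (2*M) • (x' - u) + (ContinuousLinearMap.adjoint Dh) lam
        - (ContinuousLinearMap.adjoint Dh) lam = (2*M) • (x' - u) := by abel
    rw [h0, norm_smul, Real.norm_eq_abs, abs_of_pos (by positivity)]
    rw [show ‖x' - u‖ = d' from hd'def.symm]
    have h1 := aux_eps hκ hε
    rw [hε'def] at hMd'
    clear_value M d'
    linarith only [hMd', h1]

lemma crux [FiniteDimensional ℝ E] [FiniteDimensional ℝ F]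
    {h : E → F} {C : Set F} (hC : IsClosed C)
    {u : E} (hu : h u ∈ C)
    {r : ℝ} (hr : 0 < r) (hh : ContDiffOn ℝ 1 h (ball u (2*r)))
    {κ : ℝ} (hκ : 0 ≤ κ)
    (hsub : ∀ ξ ∈ closedBall u r,
      Metric.infDist ξ {x | h x ∈ C} ≤ κ * Metric.infDist (h ξ) C)
    {v : E} (hv : v ∈ regNormal {x | h x ∈ C} u) :
    ∃ lam ∈ limNormal C (h u), ‖lam‖ ≤ κ * ‖v‖ ∧
      v = (ContinuousLinearMap.adjoint (fderiv ℝ h u)) lam := by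
  have hΓne : Set.Nonempty {x | h x ∈ C} := ⟨u, hu⟩
  rcases eq_or_lt_of_le hκ with hκ0 | hκpos
  · -- κ = 0 : the feasible set fills a neighborhood, so v = 0
    have hv0 : v = 0 := by
      have hvv : ⟪v, v⟫ ≤ (0:ℝ) := by
        apply hv
        set t : ℕ → ℝ := fun k => min (1/(k+1)) (r/(‖v‖+1)) with htdef
        have htpos : ∀ k, 0 < t k := fun k => by positivity
        have htle : ∀ k : ℕ, t k ≤ 1/(k+1) := fun k => min_le_left _ _
        have ht0 : Tendsto t atTop (𝓝 0) :=
          squeeze_zero (fun k => (htpos k).le) htle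
            tendsto_one_div_add_atTop_nhds_zero_nat
        have hmemball : ∀ k, u + t k • v ∈ closedBall u r := by
          intro k
          rw [mem_closedBall, dist_eq_norm]
          have h1 : ‖u + t k • v - u‖ = t k * ‖v‖ := by
            rw [add_sub_cancel_left, norm_smul, Real.norm_eq_abs,
              abs_of_pos (htpos k)]
          rw [h1]
          have h2 : t k ≤ r/(‖v‖+1) := min_le_right _ _
          have h3 : t k * ‖v‖ ≤ (r/(‖v‖+1)) * ‖v‖ :=
            mul_le_mul_of_nonneg_right h2 (norm_nonneg v)
          have h4 : (r/(‖v‖+1)) * ‖v‖ ≤ r := by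
            rw [div_mul_eq_mul_div, div_le_iff₀ (by positivity)]
            nlinarith [norm_nonneg v, hr]
          linarith
        have hchoice : ∀ k : ℕ, ∃ ζ ∈ {x | h x ∈ C},
            dist (u + t k • v) ζ < t k / (k+1) := by
          intro k
          apply (Metric.infDist_lt_iff hΓne).mp
          have h5 := hsub (u + t k • v) (hmemball k)
          rw [← hκ0] at h5
          have h6 : (0:ℝ) < t k / (k+1) := by positivity
          calc Metric.infDist (u + t k • v) {x | h x ∈ C} ≤ 0 := by
                simpa using h5
            _ < t k / (k+1) := h6
        choose ζ hζΓ hζd using hchoice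
        set w : ℕ → E := fun k => (t k)⁻¹ • (ζ k - u) with hwdef
        refine ⟨t, w, htpos, ht0, ?_, ?_⟩
        · -- w → v
          rw [tendsto_iff_norm_sub_tendsto_zero]
          apply squeeze_zero (fun k => norm_nonneg _) (g := fun k : ℕ => 1/(k+1))
          · intro k
            have h7 : w k - v = (t k)⁻¹ • (ζ k - (u + t k • v)) := by
              rw [hwdef]
              have h7' : (t k)⁻¹ • (ζ k - (u + t k • v))
                  = (t k)⁻¹ • (ζ k - u) - (t k)⁻¹ • (t k • v) := by
                rw [← smul_sub]
                congr 1
                abel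
              rw [h7', smul_smul, inv_mul_cancel₀ (ne_of_gt (htpos k)), one_smul]
            rw [h7, norm_smul, Real.norm_eq_abs, abs_inv, abs_of_pos (htpos k)]
            have h8 : ‖ζ k - (u + t k • v)‖ < t k/(k+1) := by
              rw [← dist_eq_norm, dist_comm]
              exact hζd k
            rw [inv_mul_le_iff₀ (htpos k)]
            calc ‖ζ k - (u + t k • v)‖ ≤ t k/(k+1) := h8.le
              _ = t k * (1/(k+1)) := by ring
          · exact tendsto_one_div_add_atTop_nhds_zero_nat
        · intro k
          have h9 : u + t k • w k = ζ k := by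
            rw [hwdef, smul_smul, mul_inv_cancel₀ (ne_of_gt (htpos k)), one_smul]
            abel
          rw [h9]
          exact hζΓ k
      have h1 : ‖v‖^2 ≤ 0 := by rwa [real_inner_self_eq_norm_sq] at hvv
      have h2 : ‖v‖^2 = 0 := le_antisymm h1 (sq_nonneg _)
      have h3 : ‖v‖ = 0 := pow_eq_zero_iff (by norm_num) |>.mp h2
      exact norm_eq_zero.mp h3
    refine ⟨0, ?_, by simp [← hκ0], by simp [hv0]⟩
    exact regNormal_subset_limNormal hu (zero_mem_regNormal C (h u))

  · -- κ > 0 : use the approximation lemma along ε = 1/(k+1)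
    have happ : ∀ k : ℕ, ∃ x' y' lam, y' ∈ C ∧ lam ∈ regNormal C y' ∧
        ‖lam‖ ≤ κ*‖v‖ + 1/(k+1) ∧ dist x' u ≤ 1/(k+1) ∧
        dist y' (h u) ≤ 1/(k+1) ∧ x' ∈ ball u (2*r) ∧
        ‖v - (ContinuousLinearMap.adjoint (fderiv ℝ h x')) lam‖ ≤ 1/(k+1) :=
      fun k => exists_approx hC hu hr hh hκpos hsub hv (by positivity)
    choose xs ys lams hysC hlamreg hlamb hxd hyd hxball hadj using happ
    have hone : ∀ k : ℕ, (1:ℝ)/(k+1) ≤ 1 := by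
      intro k
      rw [div_le_one (by positivity)]
      have := Nat.cast_nonneg (α := ℝ) k
      linarith
    have hbd : ∀ k, lams k ∈ closedBall (0:F) (κ*‖v‖+1) := by
      intro k
      rw [mem_closedBall, dist_zero_right]
      linarith [hlamb k, hone k]
    obtain ⟨lam, -, φ, hφ, hlamlim⟩ :=
      (isCompact_closedBall (0:F) (κ*‖v‖+1)).tendsto_subseq hbd
    have hφ0 : Tendsto (fun k : ℕ => (1:ℝ)/(φ k+1)) atTop (𝓝 0) :=
      tendsto_one_div_add_atTop_nhds_zero_nat.comp hφ.tendsto_atTop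
    have hxs : Tendsto (xs ∘ φ) atTop (𝓝 u) := by
      apply tendsto_iff_dist_tendsto_zero.mpr
      exact squeeze_zero (fun k => dist_nonneg) (fun k => hxd (φ k)) hφ0
    have hys : Tendsto (ys ∘ φ) atTop (𝓝 (h u)) := by
      apply tendsto_iff_dist_tendsto_zero.mpr
      exact squeeze_zero (fun k => dist_nonneg) (fun k => hyd (φ k)) hφ0
    have hmem : lam ∈ limNormal C (h u) :=
      ⟨ys ∘ φ, lams ∘ φ, fun k => hysC (φ k), fun k => hlamreg (φ k), hys, hlamlim⟩
    have hnb : ‖lam‖ ≤ κ*‖v‖ := by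
      have h1 : Tendsto (fun k => ‖lams (φ k)‖) atTop (𝓝 ‖lam‖) := hlamlim.norm
      have h2 : Tendsto (fun k => κ*‖v‖ + 1/(φ k+1)) atTop (𝓝 (κ*‖v‖)) := by
        have := tendsto_const_nhds (x := κ*‖v‖) (f := atTop (α := ℕ)) |>.add hφ0
        simpa using this
      exact le_of_tendsto_of_tendsto h1 h2 (Eventually.of_forall fun k => hlamb (φ k))
    have hDcont : ContinuousOn (fun x => fderiv ℝ h x) (ball u (2*r)) :=
      hh.continuousOn_fderiv_of_isOpen isOpen_ball le_rfl
    have humem : u ∈ ball u (2*r) := by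
      rw [mem_ball]
      simpa using by positivity
    have hDtend : Tendsto (fun k => fderiv ℝ h (xs (φ k))) atTop
        (𝓝 (fderiv ℝ h u)) :=
      ((hDcont.continuousAt (isOpen_ball.mem_nhds humem)).tendsto).comp hxs
    have hAdj : Tendsto (fun k =>
        ContinuousLinearMap.adjoint (fderiv ℝ h (xs (φ k)))) atTop
        (𝓝 (ContinuousLinearMap.adjoint (fderiv ℝ h u))) :=
      ((ContinuousLinearMap.adjoint (𝕜 := ℝ) (E := E) (F := F)
        : (E →L[ℝ] F) ≃ₗᵢ[ℝ] (F →L[ℝ] E)).continuous.tendsto _).comp hDtend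
    have hAtend : Tendsto (fun k =>
        (ContinuousLinearMap.adjoint (fderiv ℝ h (xs (φ k)))) (lams (φ k))) atTop
        (𝓝 ((ContinuousLinearMap.adjoint (fderiv ℝ h u)) lam)) := by
      have hbil := (isBoundedBilinearMap_apply (𝕜 := ℝ) (E := F) (F := E)).continuous
      exact (hbil.tendsto _).comp (hAdj.prodMk_nhds hlamlim)
    have hveq : v = (ContinuousLinearMap.adjoint (fderiv ℝ h u)) lam := by
      have h4 := (tendsto_const_nhds (x := v) (f := atTop (α := ℕ))).sub hAtend
      have h5 : Tendsto (fun k => ‖v - (ContinuousLinearMap.adjoint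
          (fderiv ℝ h (xs (φ k)))) (lams (φ k))‖) atTop (𝓝 0) :=
        squeeze_zero (fun k => norm_nonneg _) (fun k => hadj (φ k)) hφ0
      have h6 := tendsto_nhds_unique h4.norm h5
      have h7 : v - (ContinuousLinearMap.adjoint (fderiv ℝ h u)) lam = 0 :=
        norm_eq_zero.mp h6
      exact sub_eq_zero.mp h7
    exact ⟨lam, hmem, hnb, hveq⟩

set_option maxHeartbeats 2000000 in
/-- Robinson stability implies the partial bounded multiplier
property with the same modulus κ. -/
theorem robinson_stability_implies_bmp {m n l : ℕ}
    (g : EuclideanSpace ℝ (Fin m) → EuclideanSpace ℝ (Fin n) →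
      EuclideanSpace ℝ (Fin l))
    (C : Set (EuclideanSpace ℝ (Fin l))) (hC : IsClosed C)
    (pb : EuclideanSpace ℝ (Fin m)) (xb : EuclideanSpace ℝ (Fin n))
    (hg : ContDiffAt ℝ 1
      (fun q : EuclideanSpace ℝ (Fin m) × EuclideanSpace ℝ (Fin n) => g q.1 q.2)
      (pb, xb))
    (hfeas : g pb xb ∈ C)
    (V : Set (EuclideanSpace ℝ (Fin m))) (U : Set (EuclideanSpace ℝ (Fin n)))
    (hV : V ∈ 𝓝 pb) (hU : U ∈ 𝓝 xb) (κ : ℝ) (hκ : 0 ≤ κ)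
    (hRS : ∀ p ∈ V, ∀ x ∈ U,
      Metric.infDist x {ξ | g p ξ ∈ C} ≤ κ * Metric.infDist (g p x) C) :
    ∃ V' ∈ 𝓝 pb, ∃ U' ∈ 𝓝 xb, V' ⊆ V ∧ U' ⊆ U ∧
      ∀ p ∈ V', ∀ x ∈ U', g p x ∈ C →
        ∀ v ∈ limNormal {ξ | g p ξ ∈ C} x,
          ∃ lam ∈ limNormal C (g p x),
            ‖lam‖ ≤ κ * ‖v‖ ∧
            v = (ContinuousLinearMap.adjoint (fderiv ℝ (g p) x)) lam := by
  classical
  obtain ⟨W, hWnhds, hWc⟩ := hg.contDiffOn le_rfl (by simp)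
  obtain ⟨O, hOW, hOopen, hOmem⟩ := _root_.mem_nhds_iff.mp hWnhds
  have hOc : ContDiffOn ℝ 1
      (fun q : EuclideanSpace ℝ (Fin m) × EuclideanSpace ℝ (Fin n) => g q.1 q.2)
      O := hWc.mono hOW
  obtain ⟨δ₁, hδ₁, hδ₁O⟩ := Metric.isOpen_iff.mp hOopen _ hOmem
  obtain ⟨δ₂, hδ₂, hδ₂V⟩ := Metric.mem_nhds_iff.mp hV
  obtain ⟨δ₃, hδ₃, hδ₃U⟩ := Metric.mem_nhds_iff.mp hU
  set δ : ℝ := min (δ₁/4) (min δ₂ (δ₃/4)) with hδdef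
  have hδ : 0 < δ := by positivity
  have hδa : 4*δ ≤ δ₁ := by
    have := min_le_left (δ₁/4) (min δ₂ (δ₃/4))
    linarith
  have hδb : δ ≤ δ₂ := le_trans (min_le_right _ _) (min_le_left _ _)
  have hδc : 4*δ ≤ δ₃ := by
    have := le_trans (min_le_right (δ₁/4) (min δ₂ (δ₃/4))) (min_le_right _ _)
    linarith
  have hUball : Metric.ball xb (4*δ) ⊆ U :=
    le_trans (Metric.ball_subset_ball hδc) hδ₃U
  have hVball : Metric.ball pb δ ⊆ V :=
    le_trans (Metric.ball_subset_ball hδb) hδ₂V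
  refine ⟨Metric.ball pb δ, Metric.ball_mem_nhds pb hδ,
    Metric.ball xb δ, Metric.ball_mem_nhds xb hδ, hVball,
    le_trans (Metric.ball_subset_ball (by linarith)) hUball, ?_⟩
  intro p hp x hx hgx v hvmem
  set Γ : Set (EuclideanSpace ℝ (Fin n)) := {ξ | g p ξ ∈ C} with hΓdef
  -- g p is C¹ on ball xb (4δ)
  have hmaps : ∀ ξ ∈ Metric.ball xb (4*δ), (p, ξ) ∈ O := by
    intro ξ hξ
    apply hδ₁O
    rw [Metric.mem_ball, Prod.dist_eq, max_lt_iff]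
    constructor
    · exact lt_of_lt_of_le (Metric.mem_ball.mp hp) (by linarith)
    · exact lt_of_lt_of_le (Metric.mem_ball.mp hξ) (by linarith [hδ])
  have hgp : ContDiffOn ℝ 1 (g p) (Metric.ball xb (4*δ)) := by
    have hpair : ContDiff ℝ 1 (fun ξ : EuclideanSpace ℝ (Fin n) => (p, ξ)) :=
      contDiff_const.prodMk contDiff_id
    have := hOc.comp (hpair.contDiffOn) hmaps
    exact this
  -- pointwise result at regular normals of points near x
  have claim : ∀ z ∈ Γ, z ∈ Metric.ball xb (2*δ) →
      ∀ w ∈ regNormal Γ z, ∃ lam ∈ limNormal C (g p z), ‖lam‖ ≤ κ * ‖w‖ ∧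
        w = (ContinuousLinearMap.adjoint (fderiv ℝ (g p) z)) lam := by
    intro z hz hzb w hw
    have hhz : ContDiffOn ℝ 1 (g p) (Metric.ball z (2*(δ/2))) := by
      apply hgp.mono
      intro ξ hξ
      rw [Metric.mem_ball] at hξ ⊢
      have := dist_triangle ξ z xb
      have hzxb := Metric.mem_ball.mp hzb
      linarith
    have hsubz : ∀ ξ ∈ Metric.closedBall z (δ/2),
        Metric.infDist ξ Γ ≤ κ * Metric.infDist (g p ξ) C := by
      intro ξ hξ
      apply hRS p (hVball hp)
      apply hUball
      rw [Metric.mem_ball]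
      rw [Metric.mem_closedBall] at hξ
      have := dist_triangle ξ z xb
      have hzxb := Metric.mem_ball.mp hzb
      linarith
    exact crux hC hz (by positivity : (0:ℝ) < δ/2) hhz hκ hsubz hw
  -- limiting procedure
  obtain ⟨zs, vs, hzsΓ, hvsreg, hzs, hvs⟩ := hvmem
  have hev : ∀ᶠ k in atTop, dist (zs k) x < δ ∧ ‖vs k‖ ≤ ‖v‖ + 1 := by
    have h1 : ∀ᶠ k in atTop, dist (zs k) x < δ :=
      (tendsto_iff_dist_tendsto_zero.mp hzs).eventually_lt_const hδ
    have h2 : ∀ᶠ k in atTop, ‖vs k‖ ≤ ‖v‖ + 1 := by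
      have := hvs.norm.eventually_le_const (show ‖v‖ < ‖v‖ + 1 by linarith)
      exact this
    exact h1.and h2
  obtain ⟨N, hN⟩ := eventually_atTop.mp hev
  set zs' : ℕ → EuclideanSpace ℝ (Fin n) := fun k => zs (k+N) with hzs'def
  set vs' : ℕ → EuclideanSpace ℝ (Fin n) := fun k => vs (k+N) with hvs'def
  have hzs' : Tendsto zs' atTop (𝓝 x) := hzs.comp (tendsto_add_atTop_nat N)
  have hvs' : Tendsto vs' atTop (𝓝 v) := hvs.comp (tendsto_add_atTop_nat N)
  have hz'ball : ∀ k, zs' k ∈ Metric.ball xb (2*δ) := by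
    intro k
    rw [Metric.mem_ball]
    have h1 := (hN (k+N) (by omega)).1
    have h2 := Metric.mem_ball.mp hx
    have := dist_triangle (zs (k+N)) x xb
    simp only [hzs'def]
    linarith
  have hv'bd : ∀ k, ‖vs' k‖ ≤ ‖v‖ + 1 := fun k => (hN (k+N) (by omega)).2
  have hlamseq : ∀ k : ℕ, ∃ lam ∈ limNormal C (g p (zs' k)), ‖lam‖ ≤ κ * ‖vs' k‖ ∧
      vs' k = (ContinuousLinearMap.adjoint (fderiv ℝ (g p) (zs' k))) lam :=
    fun k => claim (zs' k) (hzsΓ (k+N)) (hz'ball k) (vs' k) (hvsreg (k+N))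
  choose lam hlammem hlambd hlamadj using hlamseq
  -- approximate each lam k by a regular normal
  have happrox : ∀ k : ℕ, ∃ y μ, y ∈ C ∧ μ ∈ regNormal C y ∧
      dist y (g p (zs' k)) < 1/(k+1) ∧ dist μ (lam k) < 1/(k+1) := by
    intro k
    obtain ⟨as, bs, hasC, hbsreg, has, hbs⟩ := hlammem k
    have h1 : ∀ᶠ j in atTop, dist (as j) (g p (zs' k)) < 1/(k+1) :=
      (tendsto_iff_dist_tendsto_zero.mp has).eventually_lt_const (by positivity)
    have h2 : ∀ᶠ j in atTop, dist (bs j) (lam k) < 1/(k+1) :=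
      (tendsto_iff_dist_tendsto_zero.mp hbs).eventually_lt_const (by positivity)
    obtain ⟨j, hj1, hj2⟩ := (h1.and h2).exists
    exact ⟨as j, bs j, hasC j, hbsreg j, hj1, hj2⟩
  choose ys mus hysC hmusreg hysd hmusd using happrox
  have hone : ∀ k : ℕ, (1:ℝ)/(k+1) ≤ 1 := by
    intro k
    rw [div_le_one (by positivity)]
    have := Nat.cast_nonneg (α := ℝ) k
    linarith
  have hmubd : ∀ k, mus k ∈ Metric.closedBall (0 : EuclideanSpace ℝ (Fin l))
      (κ*(‖v‖+1)+1) := by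
    intro k
    rw [Metric.mem_closedBall, dist_zero_right]
    have h1 : ‖mus k‖ ≤ ‖lam k‖ + dist (mus k) (lam k) := by
      have := norm_le_norm_add_norm_sub' (mus k) (lam k)
      rw [dist_eq_norm]
      linarith [norm_sub_rev (mus k) (lam k) ▸ this]
    have h2 : ‖lam k‖ ≤ κ*(‖v‖+1) :=
      le_trans (hlambd k) (mul_le_mul_of_nonneg_left (hv'bd k) hκ)
    linarith [hmusd k, hone k, h1, h2]
  obtain ⟨lambar, -, φ, hφ, hmulim⟩ :=
    (isCompact_closedBall (0 : EuclideanSpace ℝ (Fin l)) _).tendsto_subseq hmubd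
  have hφ0 : Tendsto (fun k : ℕ => (1:ℝ)/(φ k+1)) atTop (𝓝 0) :=
    tendsto_one_div_add_atTop_nhds_zero_nat.comp hφ.tendsto_atTop
  -- continuity of g p and of its derivative at x
  have hxball : x ∈ Metric.ball xb (4*δ) := by
    rw [Metric.mem_ball]
    have := Metric.mem_ball.mp hx
    linarith
  have hgpc : ContinuousAt (g p) x :=
    hgp.continuousOn.continuousAt (isOpen_ball.mem_nhds hxball)
  have hgz' : Tendsto (fun k => g p (zs' (φ k))) atTop (𝓝 (g p x)) :=
    (hgpc.tendsto).comp (hzs'.comp hφ.tendsto_atTop)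
  have hyslim : Tendsto (fun k => ys (φ k)) atTop (𝓝 (g p x)) := by
    apply tendsto_iff_dist_tendsto_zero.mpr
    apply squeeze_zero (fun k => dist_nonneg)
      (g := fun k => 1/(φ k+1) + dist (g p (zs' (φ k))) (g p x))
    · intro k
      calc dist (ys (φ k)) (g p x)
          ≤ dist (ys (φ k)) (g p (zs' (φ k))) + dist (g p (zs' (φ k))) (g p x) :=
            dist_triangle _ _ _
        _ ≤ 1/(φ k+1) + dist (g p (zs' (φ k))) (g p x) := by
            linarith [hysd (φ k)]
    · have := hφ0.add (tendsto_iff_dist_tendsto_zero.mp hgz')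
      simpa using this
  have hlammem' : lambar ∈ limNormal C (g p x) :=
    ⟨fun k => ys (φ k), fun k => mus (φ k), fun k => hysC (φ k),
      fun k => hmusreg (φ k), hyslim, hmulim⟩
  have hlamlim : Tendsto (fun k => lam (φ k)) atTop (𝓝 lambar) := by
    apply tendsto_iff_dist_tendsto_zero.mpr
    apply squeeze_zero (fun k => dist_nonneg)
      (g := fun k => 1/(φ k+1) + dist (mus (φ k)) lambar)
    · intro k
      calc dist (lam (φ k)) lambar
          ≤ dist (lam (φ k)) (mus (φ k)) + dist (mus (φ k)) lambar :=
            dist_triangle _ _ _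
        _ ≤ 1/(φ k+1) + dist (mus (φ k)) lambar := by
            have := hmusd (φ k)
            rw [dist_comm] at this
            linarith
    · have := hφ0.add (tendsto_iff_dist_tendsto_zero.mp hmulim)
      simpa using this
  have hnormbd : ‖lambar‖ ≤ κ * ‖v‖ := by
    have h1 : Tendsto (fun k => ‖lam (φ k)‖) atTop (𝓝 ‖lambar‖) := hlamlim.norm
    have h2 : Tendsto (fun k => κ * ‖vs' (φ k)‖) atTop (𝓝 (κ * ‖v‖)) := by
      have := ((hvs'.comp hφ.tendsto_atTop).norm).const_mul κ
      exact this
    exact le_of_tendsto_of_tendsto h1 h2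
      (Eventually.of_forall fun k => hlambd (φ k))
  have hDcont : ContinuousOn (fun ξ => fderiv ℝ (g p) ξ) (Metric.ball xb (4*δ)) :=
    hgp.continuousOn_fderiv_of_isOpen isOpen_ball le_rfl
  have hDtend : Tendsto (fun k => fderiv ℝ (g p) (zs' (φ k))) atTop
      (𝓝 (fderiv ℝ (g p) x)) :=
    ((hDcont.continuousAt (isOpen_ball.mem_nhds hxball)).tendsto).comp
      (hzs'.comp hφ.tendsto_atTop)
  have hAdj : Tendsto (fun k =>
      ContinuousLinearMap.adjoint (fderiv ℝ (g p) (zs' (φ k)))) atTop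
      (𝓝 (ContinuousLinearMap.adjoint (fderiv ℝ (g p) x))) :=
    ((ContinuousLinearMap.adjoint (𝕜 := ℝ) (E := EuclideanSpace ℝ (Fin n))
        (F := EuclideanSpace ℝ (Fin l))
      : (EuclideanSpace ℝ (Fin n) →L[ℝ] EuclideanSpace ℝ (Fin l)) ≃ₗᵢ[ℝ]
        (EuclideanSpace ℝ (Fin l) →L[ℝ] EuclideanSpace ℝ (Fin n))).continuous.tendsto
      _).comp hDtend
  have hAtend : Tendsto (fun k =>
      (ContinuousLinearMap.adjoint (fderiv ℝ (g p) (zs' (φ k)))) (lam (φ k)))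
      atTop (𝓝 ((ContinuousLinearMap.adjoint (fderiv ℝ (g p) x)) lambar)) := by
    have hbil := (isBoundedBilinearMap_apply (𝕜 := ℝ)
      (E := EuclideanSpace ℝ (Fin l)) (F := EuclideanSpace ℝ (Fin n))).continuous
    exact (hbil.tendsto _).comp (hAdj.prodMk_nhds hlamlim)
  have hfinal : v = (ContinuousLinearMap.adjoint (fderiv ℝ (g p) x)) lambar := by
    have h1 : Tendsto (fun k => vs' (φ k)) atTop (𝓝 v) := hvs'.comp hφ.tendsto_atTop
    have h2 : Tendsto (fun k => vs' (φ k)) atTop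
        (𝓝 ((ContinuousLinearMap.adjoint (fderiv ℝ (g p) x)) lambar)) := by
      have h3 : (fun k => vs' (φ k)) = fun k =>
          (ContinuousLinearMap.adjoint (fderiv ℝ (g p) (zs' (φ k)))) (lam (φ k)) := by
        funext k
        exact hlamadj (φ k)
      rw [h3]
      exact hAtend
    exact tendsto_nhds_unique h1 h2
  exact ⟨lambar, hlammem', hnormbd, hfinal⟩
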